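/- A strict two-player zero-sum finite game has at most one pure Nash equilibrium. -/
import Mathlib


/-- Profiles differing only in player 1's strategy. -/
def IComp1 {A B : Type*} (p q : A × B) : Prop := p.1 ≠ q.1 ∧ p.2 = q.2

/-- Profiles differing only in player 2's strategy. -/
def IComp2 {A B : Type*} (p q : A × B) : Prop := p.1 = q.1 ∧ p.2 ≠ q.2

/-- A two-player game is strict if comparable profiles never give the deviating player
equal payoff. -/
def Strict2 {A B : Type*} (u1 u2 : A × B → ℝ) : Prop :=
  (∀ p q, IComp1 p q → u1 p ≠ u1 q) ∧ (∀ p q, IComp2 p q → u2 p ≠ u2 q)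

/-- Arc of the preference graph of a two-player game. -/
def Arc2 {A B : Type*} (u1 u2 : A × B → ℝ) (p q : A × B) : Prop :=
  (IComp1 p q ∧ u1 p < u1 q) ∨ (IComp2 p q ∧ u2 p < u2 q)

/-- A two-player game is zero-sum if the utilities sum to zero at every profile. -/
def ZeroSum2 {A B : Type*} (u1 u2 : A × B → ℝ) : Prop := ∀ p, u1 p + u2 p = 0

/-- Pure Nash equilibrium of a two-player game. -/
def IsPNE2 {A B : Type*} (u1 u2 : A × B → ℝ) (p : A × B) : Prop :=
  (∀ q, IComp1 p q → u1 q ≤ u1 p) ∧ (∀ q, IComp2 p q → u2 q ≤ u2 p)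

/-- A strict two-player zero-sum finite game has at most one pure Nash equilibrium. -/
theorem zero_sum_at_most_one_pne {A B : Type*}
    [Fintype A] [Fintype B] [Nonempty A] [Nonempty B]
    (u1 u2 : A × B → ℝ) (hz : ZeroSum2 u1 u2) (hs : Strict2 u1 u2) :
    ∀ p q : A × B, IsPNE2 u1 u2 p → IsPNE2 u1 u2 q → p = q := by
  rintro ⟨a, b⟩ ⟨c, d⟩ hp hq
  have key : ∀ x y : A × B, u2 y = -u1 y → u1 x + u2 x = 0 := fun x _ _ => hz x
  -- main equality chain
  by_cases hac : a = c
  · subst hac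
    by_cases hbd : b = d
    · subst hbd; rfl
    · exfalso
      have h1 := hp.2 (a, d) ⟨rfl, hbd⟩
      have h2 := hq.2 (a, b) ⟨rfl, fun h => hbd h.symm⟩
      have : u2 (a, b) = u2 (a, d) := le_antisymm (by linarith) h1
      exact hs.2 (a, b) (a, d) ⟨rfl, hbd⟩ (le_antisymm (by linarith) h1)
  · exfalso
    have h1 : u1 (c, b) ≤ u1 (a, b) := hp.1 (c, b) ⟨hac, rfl⟩
    have h4 : u1 (a, d) ≤ u1 (c, d) := hq.1 (a, d) ⟨fun h => hac h.symm, rfl⟩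
    have h2 : u1 (c, d) ≤ u1 (c, b) := by
      by_cases hbd : b = d
      · subst hbd; exact le_refl _
      · have := hq.2 (c, b) ⟨rfl, fun h => hbd h.symm⟩
        have e1 := hz (c, d); have e2 := hz (c, b); linarith
    have h3 : u1 (a, b) ≤ u1 (a, d) := by
      by_cases hbd : b = d
      · subst hbd; exact le_refl _
      · have := hp.2 (a, d) ⟨rfl, hbd⟩
        have e1 := hz (a, b); have e2 := hz (a, d); linarith
    exact hs.1 (a, b) (c, b) ⟨hac, rfl⟩ (le_antisymm (by linarith) h1)
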